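/- Let r ≥ 2, let n_0, …, n_r ≥ 1 and m ≥ 0, and let l_i ∈ (ℤ_{>0})^{n_i} for i = 0, …, r be such that every tuple (l_{0j_0}, …, l_{rj_r}), with 1 ≤ j_i ≤ n_i, is a platonic tuple and l_{ij} = 1 for all i ≥ 3 and all j. Set 𝔩_i = gcd of the entries of l_i and assume gcd(𝔩_1, 𝔩_2) = gcd(𝔩_0, 𝔩_1, …, 𝔩_r). Put n = n_0 + … + n_r and write vectors of ℤ^{n+m} in blocks of sizes n_0, …, n_r, m. For 1 ≤ i ≤ r let u_i ∈ ℤ^{n+m} be the vector with block 0 equal to −l_0, block i equal to l_i and all other blocks (including the last block of size m) zero, and let w_1 = (1/gcd(𝔩_0, 𝔩_1))·u_1 and w_2 = (1/gcd(𝔩_0, 𝔩_2))·u_2, which are integral vectors. Then the saturation of the subgroup ⟨u_1, …, u_r⟩ of ℤ^{n+m} — that is, the kernel of the composite map ℤ^{n+m} → (ℤ^{n+m}/⟨u_1, …, u_r⟩)/torsion — equals the subgroup of ℤ^{n+m} generated by w_1, w_2, u_3, …, u_r. -/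

import Mathlib

/-- A platonic triple: a decreasingly ordered triple of positive integers of one of the
forms `(5,3,2)`, `(4,3,2)`, `(3,3,2)`, `(x,2,2)` with `x ≥ 2`, or `(x,y,1)` with
`x ≥ y ≥ 1`. -/
def IsPlatonicTriple (x y z : ℕ) : Prop :=
  (x = 5 ∧ y = 3 ∧ z = 2) ∨ (x = 4 ∧ y = 3 ∧ z = 2) ∨ (x = 3 ∧ y = 3 ∧ z = 2) ∨
    (2 ≤ x ∧ y = 2 ∧ z = 2) ∨ (y ≤ x ∧ 1 ≤ y ∧ z = 1)

/-- Positive integers `a_0, …, a_{n-1}` form a platonic tuple if, after reordering them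
decreasingly, the first three numbers form a platonic triple (padding with `1`'s if the
tuple has fewer than three entries) and all remaining entries equal `1`. -/
def IsPlatonicTuple {n : ℕ} (a : Fin n → ℕ) : Prop :=
  ∃ σ : Equiv.Perm (Fin n),
    (∀ i j : Fin n, i ≤ j → a (σ j) ≤ a (σ i)) ∧
    IsPlatonicTriple
      (if h : 0 < n then a (σ ⟨0, h⟩) else 1)
      (if h : 1 < n then a (σ ⟨1, h⟩) else 1)
      (if h : 2 < n then a (σ ⟨2, h⟩) else 1) ∧
    (∀ k : Fin n, 3 ≤ (k : ℕ) → a (σ k) = 1)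

/-- The paper's Lemma 6.3: for a platonic ring of Type 2 with
`gcd(𝔩_1, 𝔩_2) = gcd(𝔩_0, …, 𝔩_r)`, the saturation of the row lattice
`⟨u_1, …, u_r⟩ ⊆ ℤ^{n+m}` — i.e. the kernel of
`ℤ^{n+m} → (ℤ^{n+m}/⟨u_1, …, u_r⟩)/torsion` — is generated by
`w_1 = u_1/gcd(𝔩_0,𝔩_1)`, `w_2 = u_2/gcd(𝔩_0,𝔩_2)` and `u_3, …, u_r`. -/
lemma dvd_natAbs_mul' {k c N : ℤ} : k ∣ (c.natAbs : ℤ) * N ↔ k ∣ c * N := by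
  rcases Int.natAbs_eq c with h | h
  · constructor <;> intro hd <;> [rw [h]; rw [h] at hd] <;> exact hd
  · constructor <;> intro hd
    · rw [h, neg_mul]; exact dvd_neg.mpr hd
    · rw [h, neg_mul] at hd; exact (dvd_neg.mp hd)

lemma dvd_mul_finset_gcd' {J : Type*} [DecidableEq J] (s : Finset J) (f : J → ℕ) (k c : ℤ)
    (h : ∀ j ∈ s, k ∣ c * f j) : k ∣ c * ((s.gcd f : ℕ) : ℤ) := by
  induction s using Finset.induction_on with
  | empty => simp
  | @insert a s ha ih =>
    rw [Finset.gcd_insert]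
    have h1 : k ∣ c * f a := h a (Finset.mem_insert_self a s)
    have h2 : k ∣ c * ((s.gcd f : ℕ) : ℤ) := ih fun j hj => h j (Finset.mem_insert_of_mem hj)
    have h3 : k ∣ ((Int.gcd (c * f a) (c * s.gcd f) : ℕ) : ℤ) := Int.dvd_coe_gcd h1 h2
    rw [Int.gcd_mul_left, Int.gcd_natCast_natCast] at h3
    push_cast at h3
    rw [Int.abs_eq_natAbs] at h3
    exact dvd_natAbs_mul'.mp h3

lemma key_aux' (k a b : ℤ) (g0 g1 g2 : ℕ) (hk : k ≠ 0) (h0 : g0 ≠ 0) (h1 : g1 ≠ 0) (h2 : g2 ≠ 0)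
    (hd : Nat.gcd g1 g2 ∣ g0) (ha : k ∣ a * g1) (hb : k ∣ b * g2) (hab : k ∣ (a + b) * g0) :
    k ∣ a * g0 := by
  rcases eq_or_ne a 0 with rfl | ha0
  · simp
  rcases eq_or_ne b 0 with rfl | hb0
  · simpa using hab
  rcases eq_or_ne (a + b) 0 with hab0 | hab0
  · have hb' : k ∣ a * g2 := by
      have hba : b = -a := by linarith
      rw [hba, neg_mul] at hb
      exact dvd_neg.mp hb
    have h3 : k ∣ ((Int.gcd (a * g1) (a * g2) : ℕ) : ℤ) := Int.dvd_coe_gcd ha hb'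
    rw [Int.gcd_mul_left, Int.gcd_natCast_natCast] at h3
    have h4 : ((a.natAbs * Nat.gcd g1 g2 : ℕ) : ℤ) ∣ ((a.natAbs * g0 : ℕ) : ℤ) :=
      Int.natCast_dvd_natCast.mpr (Nat.mul_dvd_mul_left _ hd)
    have h5 := dvd_trans h3 h4
    push_cast at h5
    rw [Int.abs_eq_natAbs] at h5
    exact dvd_natAbs_mul'.mp h5
  · have hK : k.natAbs ≠ 0 := Int.natAbs_ne_zero.mpr hk
    have hA : a.natAbs ≠ 0 := Int.natAbs_ne_zero.mpr ha0
    have hB : b.natAbs ≠ 0 := Int.natAbs_ne_zero.mpr hb0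
    have hC : (a + b).natAbs ≠ 0 := Int.natAbs_ne_zero.mpr hab0
    have ha' : k.natAbs ∣ a.natAbs * g1 := by
      have h := Int.natAbs_dvd_natAbs.mpr ha
      rwa [Int.natAbs_mul, Int.natAbs_natCast] at h
    have hb' : k.natAbs ∣ b.natAbs * g2 := by
      have h := Int.natAbs_dvd_natAbs.mpr hb
      rwa [Int.natAbs_mul, Int.natAbs_natCast] at h
    have hab' : k.natAbs ∣ (a + b).natAbs * g0 := by
      have h := Int.natAbs_dvd_natAbs.mpr hab
      rwa [Int.natAbs_mul, Int.natAbs_natCast] at h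
    suffices h : k.natAbs ∣ a.natAbs * g0 by
      rw [← Int.natAbs_dvd_natAbs, Int.natAbs_mul, Int.natAbs_natCast]
      exact h
    rw [← Nat.factorization_le_iff_dvd hK (Nat.mul_ne_zero hA h0), Finsupp.le_def]
    intro p
    by_cases hp : p.Prime
    swap
    · simp [Nat.factorization_eq_zero_of_not_prime _ hp]
    have f1 : k.natAbs.factorization p ≤ a.natAbs.factorization p + g1.factorization p := by
      have h := (Nat.factorization_le_iff_dvd hK (Nat.mul_ne_zero hA h1)).mpr ha' p
      rwa [Nat.factorization_mul hA h1] at h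
    have f2 : k.natAbs.factorization p ≤ b.natAbs.factorization p + g2.factorization p := by
      have h := (Nat.factorization_le_iff_dvd hK (Nat.mul_ne_zero hB h2)).mpr hb' p
      rwa [Nat.factorization_mul hB h2] at h
    have f3 : k.natAbs.factorization p ≤ (a + b).natAbs.factorization p + g0.factorization p := by
      have h := (Nat.factorization_le_iff_dvd hK (Nat.mul_ne_zero hC h0)).mpr hab' p
      rwa [Nat.factorization_mul hC h0] at h
    have fmin : min (g1.factorization p) (g2.factorization p) ≤ g0.factorization p := by
      have hg12 : Nat.gcd g1 g2 ≠ 0 := Nat.gcd_ne_zero_left h1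
      have h := (Nat.factorization_le_iff_dvd hg12 h0).mpr hd p
      rwa [Nat.factorization_gcd h1 h2, Finsupp.inf_apply] at h
    rw [Nat.factorization_mul hA h0]
    have goal_eq : (a.natAbs.factorization + g0.factorization) p
        = a.natAbs.factorization p + g0.factorization p := rfl
    rw [goal_eq]
    by_contra hlt
    push_neg at hlt
    have hβα : a.natAbs.factorization p < b.natAbs.factorization p := by omega
    have hδα : (a + b).natAbs.factorization p ≤ a.natAbs.factorization p := by
      by_contra hcon
      push_neg at hcon
      set α := a.natAbs.factorization p
      have hpb : (p : ℤ) ^ (α + 1) ∣ b := by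
        rw [← Nat.cast_pow, Int.natCast_dvd, hp.pow_dvd_iff_le_factorization hB]
        omega
      have hpab : (p : ℤ) ^ (α + 1) ∣ (a + b) := by
        rw [← Nat.cast_pow, Int.natCast_dvd, hp.pow_dvd_iff_le_factorization hC]
        omega
      have hpa : (p : ℤ) ^ (α + 1) ∣ a := by
        have h := dvd_sub hpab hpb
        simpa using h
      rw [← Nat.cast_pow, Int.natCast_dvd, hp.pow_dvd_iff_le_factorization hA] at hpa
      omega
    omega

theorem saturation_of_platonic_row_lattice
    (r : ℕ) (hr : 2 ≤ r) (n : Fin (r + 1) → ℕ) (hn : ∀ i, 1 ≤ n i) (m : ℕ)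
    (l : (i : Fin (r + 1)) → Fin (n i) → ℕ) (hl : ∀ i j, 0 < l i j)
    (hplat : ∀ j : (i : Fin (r + 1)) → Fin (n i),
      IsPlatonicTuple fun i => l i (j i))
    (hone : ∀ i : Fin (r + 1), 3 ≤ (i : ℕ) → ∀ j, l i j = 1)
    (g : Fin (r + 1) → ℕ) (hg : ∀ i, g i = Finset.univ.gcd (l i))
    (hgcd : Nat.gcd (g 1) (g 2) = Finset.univ.gcd g)
    (u : Fin (r + 1) → (((i : Fin (r + 1)) × Fin (n i)) ⊕ Fin m) → ℤ)
    (hu : ∀ i, u i = Sum.elim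
      (fun x => (if x.1 = i then (l x.1 x.2 : ℤ) else 0) -
        (if x.1 = 0 then (l x.1 x.2 : ℤ) else 0))
      (fun _ => 0))
    (w₁ w₂ : (((i : Fin (r + 1)) × Fin (n i)) ⊕ Fin m) → ℤ)
    (hw₁ : ∀ x, w₁ x = u 1 x / (Nat.gcd (g 0) (g 1) : ℤ))
    (hw₂ : ∀ x, w₂ x = u 2 x / (Nat.gcd (g 0) (g 2) : ℤ))
    (S : Submodule ℤ ((((i : Fin (r + 1)) × Fin (n i)) ⊕ Fin m) → ℤ))
    (hS : S = Submodule.span ℤ (u '' {i | i ≠ 0})) :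
    Submodule.comap S.mkQ
        (Submodule.torsion ℤ
          (((((i : Fin (r + 1)) × Fin (n i)) ⊕ Fin m) → ℤ) ⧸ S))
      = Submodule.span ℤ
          (({w₁, w₂} : Set ((((i : Fin (r + 1)) × Fin (n i)) ⊕ Fin m) → ℤ)) ∪
            u '' {i | 3 ≤ (i : ℕ)}) := by
  classical
  obtain ⟨r', rfl⟩ : ∃ r', r = r' + 2 := ⟨r - 2, by omega⟩
  have hv1 : ((1 : Fin (r' + 2 + 1)) : ℕ) = 1 := by simp
  have hv2 : ((2 : Fin (r' + 2 + 1)) : ℕ) = 2 := by simp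
  have hne10 : (1 : Fin (r' + 2 + 1)) ≠ 0 := by
    intro h; rw [Fin.ext_iff, hv1] at h; simp at h
  have hne20 : (2 : Fin (r' + 2 + 1)) ≠ 0 := by
    intro h; rw [Fin.ext_iff, hv2] at h; simp at h
  have hne21 : (2 : Fin (r' + 2 + 1)) ≠ 1 := by
    intro h; rw [Fin.ext_iff, hv2, hv1] at h; simp at h
  have hgdvd : ∀ i j, g i ∣ l i j := fun i j => by
    rw [hg i]; exact Finset.gcd_dvd (Finset.mem_univ j)
  have hgne : ∀ i, g i ≠ 0 := fun i => by
    intro h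
    have h2 := hgdvd i ⟨0, hn i⟩
    rw [h] at h2
    have h3 := zero_dvd_iff.mp h2
    have := hl i ⟨0, hn i⟩
    omega
  have hgone : ∀ i : Fin (r' + 2 + 1), 3 ≤ (i : ℕ) → g i = 1 := fun i h3 => by
    have h2 := hgdvd i ⟨0, hn i⟩
    rw [hone i h3 ⟨0, hn i⟩] at h2
    exact Nat.dvd_one.mp h2
  have hd12 : Nat.gcd (g 1) (g 2) ∣ g 0 := by
    rw [hgcd]; exact Finset.gcd_dvd (Finset.mem_univ 0)
  have u0 : u 0 = 0 := by
    rw [hu 0]; funext x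
    cases x with
    | inl x => simp
    | inr x => simp
  -- span over the full range
  have hS' : S = Submodule.span ℤ (Set.range u) := by
    rw [hS]
    apply le_antisymm
    · exact Submodule.span_mono (Set.image_subset_range u _)
    · rw [Submodule.span_le]
      rintro - ⟨i, rfl⟩
      by_cases hi : i = 0
      · rw [hi, u0]; exact Submodule.zero_mem _
      · exact Submodule.subset_span ⟨i, hi, rfl⟩
  -- u 1 and u 2 as multiples of w₁, w₂
  have hdvd_u : ∀ (t : Fin (r' + 2 + 1)) (ht : t ≠ 0) (x),
      ((Nat.gcd (g 0) (g t) : ℕ) : ℤ) ∣ u t x := by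
    intro t ht x
    rw [hu t]
    cases x with
    | inr q => simp
    | inl x =>
      obtain ⟨s, j⟩ := x
      simp only [Sum.elim_inl]
      by_cases hs1 : s = t
      · subst hs1
        rw [if_pos rfl, if_neg ht]
        have : (Nat.gcd (g 0) (g s)) ∣ l s j := dvd_trans (Nat.gcd_dvd_right _ _) (hgdvd s j)
        simpa using Int.natCast_dvd_natCast.mpr this
      · rw [if_neg (fun h => hs1 h)]
        by_cases hs0 : s = 0
        · subst hs0
          rw [if_pos rfl]
          have : (Nat.gcd (g 0) (g t)) ∣ l 0 j := dvd_trans (Nat.gcd_dvd_left _ _) (hgdvd 0 j)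
          rw [zero_sub]
          exact dvd_neg.mpr (by simpa using Int.natCast_dvd_natCast.mpr this)
        · rw [if_neg hs0]; simp
  have hu1 : u 1 = ((Nat.gcd (g 0) (g 1) : ℕ) : ℤ) • w₁ := by
    funext x
    rw [Pi.smul_apply, hw₁ x, smul_eq_mul, Int.mul_ediv_cancel' (hdvd_u 1 hne10 x)]
  have hu2 : u 2 = ((Nat.gcd (g 0) (g 2) : ℕ) : ℤ) • w₂ := by
    funext x
    rw [Pi.smul_apply, hw₂ x, smul_eq_mul, Int.mul_ediv_cancel' (hdvd_u 2 hne20 x)]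
  have hD1 : (Nat.gcd (g 0) (g 1)) ≠ 0 := fun h => hgne 0 (Nat.eq_zero_of_gcd_eq_zero_left h)
  have hD2 : (Nat.gcd (g 0) (g 2)) ≠ 0 := fun h => hgne 0 (Nat.eq_zero_of_gcd_eq_zero_left h)
  set T : Finset (Fin (r' + 2 + 1)) := Finset.univ \ {0, 1, 2} with hT
  have hTmem : ∀ i ∈ T, 3 ≤ (i : ℕ) := by
    intro i hi
    rw [hT, Finset.mem_sdiff, Finset.mem_insert, Finset.mem_insert, Finset.mem_singleton] at hi
    push_neg at hi
    obtain ⟨-, h0, h1, h2⟩ := hi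
    have hi0 : (i : ℕ) ≠ 0 := fun h => h0 (by rw [Fin.ext_iff, h]; simp)
    have hi1 : (i : ℕ) ≠ 1 := fun h => h1 (by rw [Fin.ext_iff, h, hv1])
    have hi2 : (i : ℕ) ≠ 2 := fun h => h2 (by rw [Fin.ext_iff, h, hv2])
    omega
  have h01 : (0 : Fin (r' + 2 + 1)) ≠ 1 := fun h => hne10 h.symm
  have h02 : (0 : Fin (r' + 2 + 1)) ≠ 2 := fun h => hne20 h.symm
  have h12' : (1 : Fin (r' + 2 + 1)) ≠ 2 := fun h => hne21 h.symm
  have hsplit : ∀ (M : Type) [AddCommMonoid M] (f : Fin (r' + 2 + 1) → M),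
      ∑ i, f i = f 0 + f 1 + f 2 + ∑ i ∈ T, f i := by
    intro M _ f
    have h4 := Finset.sum_sdiff (f := f) (Finset.subset_univ ({0, 1, 2} : Finset (Fin (r' + 2 + 1))))
    have h3 : ∑ i ∈ ({0, 1, 2} : Finset (Fin (r' + 2 + 1))), f i = f 0 + f 1 + f 2 := by
      rw [Finset.sum_insert (by simp [h01, h02]), Finset.sum_insert (by simp [h12']),
        Finset.sum_singleton]
      exact (add_assoc (f 0) (f 1) (f 2)).symm
    rw [hT, ← h4, h3]
    abel
  ext v
  simp only [Submodule.mem_comap]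
  constructor
  · intro hv
    obtain ⟨⟨k, hkmem⟩, hkv⟩ := (Submodule.mem_torsion_iff _).mp hv
    have hk : k ≠ 0 := mem_nonZeroDivisors_iff_ne_zero.mp hkmem
    have hkvS : k • v ∈ S := by
      have h1 : S.mkQ (k • v) = 0 := by
        rw [map_smul]
        exact hkv
      rwa [Submodule.mkQ_apply, Submodule.Quotient.mk_eq_zero] at h1
    rw [hS', Submodule.mem_span_range_iff_exists_fun] at hkvS
    obtain ⟨c, hc⟩ := hkvS
    have hcoord : ∀ x, ∑ i, c i * u i x = k * v x := by
      intro x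
      have h := congrFun hc x
      simpa using h
    have coordt : ∀ (t : Fin (r' + 2 + 1)), t ≠ 0 → ∀ j,
        k * v (Sum.inl ⟨t, j⟩) = c t * l t j := by
      intro t ht j
      rw [← hcoord (Sum.inl ⟨t, j⟩)]
      simp only [hu, Sum.elim_inl, if_neg ht, sub_zero, mul_ite, mul_zero]
      rw [Finset.sum_ite_eq]
      simp
    have coord0 : ∀ j, k * v (Sum.inl ⟨0, j⟩) = (c 0 - ∑ i, c i) * l 0 j := by
      intro j
      rw [← hcoord (Sum.inl ⟨0, j⟩)]
      simp only [hu, Sum.elim_inl, if_pos rfl, mul_sub, mul_ite, mul_zero]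
      rw [Finset.sum_sub_distrib, Finset.sum_ite_eq]
      simp only [Finset.mem_univ, if_true]
      rw [← Finset.sum_mul]
      ring
    have hdt : ∀ t : Fin (r' + 2 + 1), t ≠ 0 → k ∣ c t * (g t : ℤ) := by
      intro t ht
      rw [hg t]
      exact dvd_mul_finset_gcd' Finset.univ (l t) k (c t)
        (fun j _ => ⟨v (Sum.inl ⟨t, j⟩), (coordt t ht j).symm⟩)
    have hrest : ∀ t : Fin (r' + 2 + 1), 3 ≤ (t : ℕ) → k ∣ c t := by
      intro t h3
      have ht0 : t ≠ 0 := by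
        intro h
        rw [h] at h3
        simp at h3
      have h := hdt t ht0
      rw [hgone t h3] at h
      simpa using h
    have hd0 : k ∣ (∑ i, c i - c 0) * (g 0 : ℤ) := by
      rw [hg 0]
      apply dvd_mul_finset_gcd'
      intro j _
      refine ⟨-v (Sum.inl ⟨0, j⟩), ?_⟩
      have h := coord0 j
      have h2 : (∑ i, c i - c 0) * ((l 0 j : ℕ) : ℤ) = -((c 0 - ∑ i, c i) * l 0 j) := by ring
      rw [h2, ← h]
      ring
    have hkT : k ∣ ∑ i ∈ T, c i := Finset.dvd_sum (fun i hi => hrest i (hTmem i hi))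
    have h12 : k ∣ (c 1 + c 2) * (g 0 : ℤ) := by
      have hsum := hsplit ℤ c
      have heq : (∑ i, c i - c 0) * (g 0 : ℤ)
          = (c 1 + c 2) * (g 0 : ℤ) + (∑ i ∈ T, c i) * (g 0 : ℤ) := by
        rw [hsum]; ring
      have h2 : k ∣ (∑ i ∈ T, c i) * (g 0 : ℤ) := Dvd.dvd.mul_right hkT _
      have h3 := hd0
      rw [heq] at h3
      simpa using dvd_sub h3 h2
    have hkey1 : k ∣ c 1 * (g 0 : ℤ) :=
      key_aux' k (c 1) (c 2) (g 0) (g 1) (g 2) hk (hgne 0) (hgne 1) (hgne 2) hd12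
        (hdt 1 hne10) (hdt 2 hne20) h12
    have hkey2 : k ∣ c 2 * (g 0 : ℤ) :=
      key_aux' k (c 2) (c 1) (g 0) (g 2) (g 1) hk (hgne 0) (hgne 2) (hgne 1)
        (by rwa [Nat.gcd_comm]) (hdt 2 hne20) (hdt 1 hne10) (by rwa [add_comm])
    have hcD : ∀ t : Fin (r' + 2 + 1), t ≠ 0 → k ∣ c t * (g 0 : ℤ) →
        k ∣ c t * ((Nat.gcd (g 0) (g t) : ℕ) : ℤ) := by
      intro t ht h0t
      have h3 := Int.dvd_coe_gcd h0t (hdt t ht)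
      rw [Int.gcd_mul_left, Int.gcd_natCast_natCast] at h3
      push_cast at h3
      rw [Int.abs_eq_natAbs] at h3
      exact dvd_natAbs_mul'.mp h3
    have hcD1 := hcD 1 hne10 hkey1
    have hcD2 := hcD 2 hne20 hkey2
    have hveq : v = (c 1 * ((Nat.gcd (g 0) (g 1) : ℕ) : ℤ) / k) • w₁
        + (c 2 * ((Nat.gcd (g 0) (g 2) : ℕ) : ℤ) / k) • w₂
        + ∑ i ∈ T, (c i / k) • u i := by
      have hkk : k • v = k • ((c 1 * ((Nat.gcd (g 0) (g 1) : ℕ) : ℤ) / k) • w₁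
          + (c 2 * ((Nat.gcd (g 0) (g 2) : ℕ) : ℤ) / k) • w₂
          + ∑ i ∈ T, (c i / k) • u i) := by
        rw [smul_add, smul_add, smul_smul, smul_smul, Int.mul_ediv_cancel' hcD1,
          Int.mul_ediv_cancel' hcD2, Finset.smul_sum]
        have hTsum : ∀ i ∈ T, k • ((c i / k) • u i) = c i • u i := by
          intro i hi
          rw [smul_smul, Int.mul_ediv_cancel' (hrest i (hTmem i hi))]
        rw [Finset.sum_congr rfl hTsum, ← hc,
          hsplit _ (fun i => c i • u i), u0, smul_zero, zero_add, hu1, hu2,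
          smul_smul, smul_smul]
      exact smul_right_injective _ hk hkk
    rw [hveq]
    refine Submodule.add_mem _ (Submodule.add_mem _ ?_ ?_) ?_
    · exact Submodule.smul_mem _ _ (Submodule.subset_span
        (Set.mem_union_left _ (Set.mem_insert _ _)))
    · exact Submodule.smul_mem _ _ (Submodule.subset_span
        (Set.mem_union_left _ (Set.mem_insert_of_mem _ rfl)))
    · exact Submodule.sum_mem _ (fun i hi => Submodule.smul_mem _ _
        (Submodule.subset_span (Set.mem_union_right _ ⟨i, hTmem i hi, rfl⟩)))
  · intro hv
    have hsub : (({w₁, w₂} : Set ((((i : Fin (r' + 2 + 1)) × Fin (n i)) ⊕ Fin m) → ℤ)) ∪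
        u '' {i | 3 ≤ (i : ℕ)}) ⊆
        (Submodule.comap S.mkQ (Submodule.torsion ℤ
          (((((i : Fin (r' + 2 + 1)) × Fin (n i)) ⊕ Fin m) → ℤ) ⧸ S)) : Set _) := by
      rintro x (hx | ⟨i, hi3, rfl⟩)
      · have hu12 : ∀ (t : Fin (r' + 2 + 1)) (w : (((i : Fin (r' + 2 + 1)) × Fin (n i)) ⊕ Fin m) → ℤ)
            (d : ℕ), d ≠ 0 → t ≠ 0 → u t = (d : ℤ) • w →
            w ∈ (Submodule.comap S.mkQ (Submodule.torsion ℤ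
              (((((i : Fin (r' + 2 + 1)) × Fin (n i)) ⊕ Fin m) → ℤ) ⧸ S)) : Set _) := by
          intro t w d hd ht huw
          rw [SetLike.mem_coe, Submodule.mem_comap]
          rw [Submodule.mem_torsion_iff]
          refine ⟨⟨(d : ℤ), mem_nonZeroDivisors_iff_ne_zero.mpr (Int.natCast_ne_zero.mpr hd)⟩, ?_⟩
          show (d : ℤ) • S.mkQ w = 0
          rw [← map_smul, ← huw, Submodule.mkQ_apply, Submodule.Quotient.mk_eq_zero]
          rw [hS]
          exact Submodule.subset_span ⟨t, ht, rfl⟩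
        rcases hx with rfl | rfl
        · exact hu12 1 x _ hD1 hne10 hu1
        · exact hu12 2 x _ hD2 hne20 hu2
      · rw [SetLike.mem_coe, Submodule.mem_comap]
        have hi0 : i ≠ 0 := by
          intro h
          rw [h] at hi3
          simp at hi3
        have h0 : S.mkQ (u i) = 0 := by
          rw [Submodule.mkQ_apply, Submodule.Quotient.mk_eq_zero, hS]
          exact Submodule.subset_span ⟨i, hi0, rfl⟩
        rw [h0]
        exact Submodule.zero_mem _
    exact Submodule.span_le.mpr hsub hv
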